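/- arXiv:nlin/0310010 — 3 statements merged into one kernel-verified Lean document; each statement's English description precedes it below -/
import Mathlib

section
/- Let A be a commutative ℝ-algebra of formal power series in ℏ over a base algebra, and let X, Y be commuting derivations. Define the product f ⋆ g := Σ_{s≥0} (ℏ^s/s!) Y^s(f) · X^s(g). Then ⋆ is associative. -/
open Finset Finset.Nat

section KMAux

variable {A : Type*} [CommRing A] [Algebra ℝ A]

lemma km_iter_coe (D : Derivation ℝ A A) (s : ℕ) :
    (⇑D)^[s] = ⇑((D.toLinearMap : Module.End ℝ A) ^ s) := by
  rw [Module.End.coe_pow]; rfl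

lemma km_iter_sum (D : Derivation ℝ A A) (s : ℕ) {ι : Type*} (t : Finset ι) (F : ι → A) :
    (⇑D)^[s] (∑ i ∈ t, F i) = ∑ i ∈ t, (⇑D)^[s] (F i) := by
  simp [km_iter_coe, map_sum]

lemma km_iter_smul (D : Derivation ℝ A A) (s : ℕ) (r : ℝ) (a : A) :
    (⇑D)^[s] (r • a) = r • (⇑D)^[s] a := by
  simp [km_iter_coe, map_smul]

lemma km_iter_leibniz (D : Derivation ℝ A A) (s : ℕ) (a b : A) :
    (⇑D)^[s] (a * b) =
      ∑ p ∈ antidiagonal s, (s.choose p.1) • ((⇑D)^[p.1] a * (⇑D)^[p.2] b) := by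
  induction s with
  | zero => simp
  | succ s ih =>
    rw [Function.iterate_succ_apply', ih, map_sum]
    have leib : ∀ x y : A, D (x * y) = D x * y + x * D y := by
      intro x y; rw [D.leibniz]; ring_nf
    have h1 : ∀ p : ℕ × ℕ, (⇑D)^[p.1] a * D ((⇑D)^[p.2] b) = (⇑D)^[p.1] a * (⇑D)^[p.2+1] b := by
      intro p; rw [← Function.iterate_succ_apply' (⇑D)]
    have h2 : ∀ p : ℕ × ℕ, D ((⇑D)^[p.1] a) * (⇑D)^[p.2] b = (⇑D)^[p.1+1] a * (⇑D)^[p.2] b := by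
      intro p; rw [← Function.iterate_succ_apply' (⇑D)]
    simp only [map_nsmul, leib, smul_add, Finset.sum_add_distrib, h1, h2]
    rw [sum_antidiagonal_succ]
    simp only [Nat.choose_succ_succ, add_smul, Finset.sum_add_distrib, Nat.succ_eq_add_one]
    have e2 : ∑ x ∈ antidiagonal s, s.choose x.1 • ((⇑D)^[x.1] a * (⇑D)^[x.2+1] b)
        = (s+1).choose 0 • ((⇑D)^[0] a * (⇑D)^[s+1] b) +
          ∑ x ∈ antidiagonal s, s.choose (x.1+1) • ((⇑D)^[x.1+1] a * (⇑D)^[x.2] b) := by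
      have e1 := sum_antidiagonal_succ' (n := s)
        (f := fun q : ℕ × ℕ => s.choose q.1 • ((⇑D)^[q.1] a * (⇑D)^[q.2] b))
      have e0 := sum_antidiagonal_succ (n := s)
        (f := fun q : ℕ × ℕ => s.choose q.1 • ((⇑D)^[q.1] a * (⇑D)^[q.2] b))
      simp only [Nat.choose_succ_self, zero_smul, zero_add, Nat.choose_zero_right] at e1 e0
      rw [← e1, e0]
      simp
    rw [e2]
    abel

lemma km_iter_comm (X Y : A → A) (hcomm : ∀ a, X (Y a) = Y (X a)) (m k : ℕ) (a : A) :
    Y^[m] (X^[k] a) = X^[k] (Y^[m] a) := by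
  have hc : Function.Commute X Y := hcomm
  exact ((hc.iterate_left k).iterate_right m a).symm

lemma km_scalar (a u v : ℕ) :
    (((u+v).factorial : ℝ))⁻¹ * ((a.factorial : ℝ))⁻¹ * ((u+v).choose u : ℝ)
      = ((a.factorial * u.factorial * v.factorial : ℕ) : ℝ)⁻¹ := by
  have keyn : (u+v).choose u * u.factorial * v.factorial = (u+v).factorial := by
    have := Nat.choose_mul_factorial_mul_factorial (Nat.le_add_right u v)
    simpa [Nat.add_sub_cancel_left] using this
  have key : ((u+v).choose u : ℝ) * u.factorial * v.factorial = ((u+v).factorial : ℝ) := by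
    exact_mod_cast congrArg (Nat.cast : ℕ → ℝ) keyn
  have hC : ((u+v).choose u : ℝ) ≠ 0 :=
    Nat.cast_ne_zero.mpr (Nat.choose_pos (Nat.le_add_right u v)).ne'
  have ha : (a.factorial : ℝ) ≠ 0 := Nat.cast_ne_zero.mpr a.factorial_ne_zero
  have hu : (u.factorial : ℝ) ≠ 0 := Nat.cast_ne_zero.mpr u.factorial_ne_zero
  have hv : (v.factorial : ℝ) ≠ 0 := Nat.cast_ne_zero.mpr v.factorial_ne_zero
  push_cast
  rw [← key]
  field_simp

end KMAux

/-- The Kupershmidt–Manin type product `f ⋆ g = Σ_{s≥0} (ℏ^s/s!) Y^s(f) X^s(g)`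
on `A[[ℏ]]`, with `X`, `Y` extended ℏ-linearly. -/
noncomputable def kmStar {A : Type*} [CommRing A] [Algebra ℝ A]
    (X Y : A → A) (f g : PowerSeries A) : PowerSeries A :=
  PowerSeries.mk fun n =>
    ∑ s ∈ Finset.range (n + 1), ∑ ij ∈ Finset.HasAntidiagonal.antidiagonal (n - s),
      ((s.factorial : ℝ))⁻¹ •
        (Y^[s] (PowerSeries.coeff (R := A) ij.1 f) * X^[s] (PowerSeries.coeff (R := A) ij.2 g))

lemma km_coeff {A : Type*} [CommRing A] [Algebra ℝ A]
    (X Y : A → A) (f g : PowerSeries A) (n : ℕ) :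
    PowerSeries.coeff (R := A) n (kmStar X Y f g)
      = ∑ p ∈ antidiagonal n, ∑ q ∈ antidiagonal p.2,
          ((p.1.factorial : ℝ))⁻¹ •
            (Y^[p.1] (PowerSeries.coeff (R := A) q.1 f) * X^[p.1] (PowerSeries.coeff (R := A) q.2 g)) := by
  rw [kmStar, PowerSeries.coeff_mk]
  exact (sum_antidiagonal_eq_sum_range_succ
    (fun s m => ∑ ij ∈ antidiagonal m, ((s.factorial : ℝ))⁻¹ •
      (Y^[s] (PowerSeries.coeff (R := A) ij.1 f) * X^[s] (PowerSeries.coeff (R := A) ij.2 g))) n).symm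

/-- the KM product built from commuting derivations is associative. -/
theorem stmt1 {A : Type*} [CommRing A] [Algebra ℝ A]
    (X Y : Derivation ℝ A A) (hcomm : ∀ a, X (Y a) = Y (X a))
    (f g h : PowerSeries A) :
    kmStar ⇑X ⇑Y (kmStar ⇑X ⇑Y f g) h = kmStar ⇑X ⇑Y f (kmStar ⇑X ⇑Y g h) := by
  ext n
  set F := fun i => PowerSeries.coeff (R := A) i f with hF
  set G := fun i => PowerSeries.coeff (R := A) i g with hG
  set H := fun i => PowerSeries.coeff (R := A) i h with hH
  set Tm : ℕ → ℕ → ℕ → ℕ → ℕ → ℕ → A := fun a b c i j k =>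
    ((a.factorial * b.factorial * c.factorial : ℕ) : ℝ)⁻¹ •
      ((⇑Y)^[a+b] (F i) * ((⇑X)^[a] ((⇑Y)^[c] (G j)) * (⇑X)^[b+c] (H k))) with hTm
  have hL : (PowerSeries.coeff (R := A) n) (kmStar ⇑X ⇑Y (kmStar ⇑X ⇑Y f g) h)
      = ∑ p ∈ antidiagonal n, ∑ q ∈ antidiagonal p.2, ∑ r ∈ antidiagonal q.1,
          ∑ w ∈ antidiagonal r.2, ∑ z ∈ antidiagonal p.1,
            Tm r.1 z.1 z.2 w.1 w.2 q.2 := by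
    rw [km_coeff]
    refine Finset.sum_congr rfl fun p hp => Finset.sum_congr rfl fun q hq => ?_
    rw [km_coeff]
    simp only [km_iter_sum, km_iter_smul, km_iter_leibniz, Finset.sum_mul, Finset.mul_sum,
      Finset.smul_sum, smul_mul_assoc, mul_smul_comm]
    refine Finset.sum_congr rfl fun r hr => Finset.sum_congr rfl fun w hw =>
      Finset.sum_congr rfl fun z hz => ?_
    have hz' : z.1 + z.2 = p.1 := mem_antidiagonal.mp hz
    rw [← hz']
    rw [← Function.iterate_add_apply (⇑Y) z.1 r.1,
      show z.1 + r.1 = r.1 + z.1 from Nat.add_comm _ _,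
      km_iter_comm ⇑X ⇑Y hcomm]
    rw [← Nat.cast_smul_eq_nsmul ℝ, smul_smul, smul_smul]
    rw [hTm]
    congr 1
    · rw [← km_scalar r.1 z.1 z.2]
    · ring
  have hR : (PowerSeries.coeff (R := A) n) (kmStar ⇑X ⇑Y f (kmStar ⇑X ⇑Y g h))
      = ∑ p ∈ antidiagonal n, ∑ q ∈ antidiagonal p.2, ∑ r ∈ antidiagonal q.2,
          ∑ w ∈ antidiagonal r.2, ∑ z ∈ antidiagonal p.1,
            Tm z.1 z.2 r.1 q.1 w.1 w.2 := by
    rw [km_coeff]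
    refine Finset.sum_congr rfl fun p hp => Finset.sum_congr rfl fun q hq => ?_
    rw [km_coeff]
    simp only [km_iter_sum, km_iter_smul, km_iter_leibniz, Finset.sum_mul, Finset.mul_sum,
      Finset.smul_sum, smul_mul_assoc, mul_smul_comm]
    refine Finset.sum_congr rfl fun r hr => Finset.sum_congr rfl fun w hw =>
      Finset.sum_congr rfl fun z hz => ?_
    have hz' : z.1 + z.2 = p.1 := mem_antidiagonal.mp hz
    rw [← hz']
    rw [← Function.iterate_add_apply (⇑X) z.2 r.1]
    rw [← Nat.cast_smul_eq_nsmul ℝ, smul_smul, smul_smul]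
    simp only [hTm]
    congr 1
    · rw [show z.1.factorial * z.2.factorial * r.1.factorial
          = r.1.factorial * z.1.factorial * z.2.factorial from by ring,
        ← km_scalar r.1 z.1 z.2]
  rw [hL, hR]
  rw [Finset.sum_sigma', Finset.sum_sigma', Finset.sum_sigma', Finset.sum_sigma',
    Finset.sum_sigma', Finset.sum_sigma', Finset.sum_sigma', Finset.sum_sigma']
  refine Finset.sum_nbij'
    (i := fun x => ⟨⟨⟨⟨(x.1.1.2.1 + x.2.1, x.1.2.1 + (x.2.2 + (x.1.2.2 + x.1.1.1.2.2))),
            (x.1.2.1, x.2.2 + (x.1.2.2 + x.1.1.1.2.2))⟩,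
           (x.2.2, x.1.2.2 + x.1.1.1.2.2)⟩,
          (x.1.2.2, x.1.1.1.2.2)⟩,
         (x.1.1.2.1, x.2.1)⟩)
    (j := fun x => ⟨⟨⟨⟨(x.2.2 + x.1.1.2.1, x.2.1 + (x.1.1.1.2.1 + (x.1.2.1 + x.1.2.2))),
            (x.2.1 + (x.1.1.1.2.1 + x.1.2.1), x.1.2.2)⟩,
           (x.2.1, x.1.1.1.2.1 + x.1.2.1)⟩,
          (x.1.1.1.2.1, x.1.2.1)⟩,
         (x.2.2, x.1.1.2.1)⟩)
    ?_ ?_ ?_ ?_ ?_ <;>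
    (intro x hx;
     obtain ⟨⟨⟨⟨⟨t, m⟩, p', k⟩, s, m2⟩, i, j⟩, u, v⟩ := x;
     simp only [mem_sigma, HasAntidiagonal.mem_antidiagonal, Sigma.mk.inj_iff, Prod.mk.injEq, heq_eq_eq,
       and_true, true_and] at hx ⊢) <;>
    first | omega | rfl
end

section
/- Let g be a Lie algebra and R : g → g a linear map satisfying the modified Yang–Baxter equation [Ra,Rb] − R([Ra,b]+[a,Rb]) + α[a,b] = 0 for some α ∈ ℝ. Then the bracket [a,b]_R := [Ra,b] + [a,Rb] is a Lie bracket on g (antisymmetric and satisfying the Jacobi identity). -/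
/-- if `R` satisfies the modified Yang–Baxter equation
`[Ra,Rb] − R([Ra,b]+[a,Rb]) + α[a,b] = 0`, then
`[a,b]_R := [Ra,b] + [a,Rb]` is a Lie bracket (antisymmetric and Jacobi). -/
theorem stmt10 {L : Type*} [LieRing L] [LieAlgebra ℝ L]
    (R : L →ₗ[ℝ] L) (α : ℝ)
    (hyb : ∀ a b : L, ⁅R a, R b⁆ - R (⁅R a, b⁆ + ⁅a, R b⁆) + α • ⁅a, b⁆ = 0) :
    let br : L → L → L := fun a b => ⁅R a, b⁆ + ⁅a, R b⁆
    (∀ a b, br a b = - br b a) ∧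
    (∀ a b c, br a (br b c) + br b (br c a) + br c (br a b) = 0) := by
  have hR : ∀ a b : L, R (⁅R a, b⁆ + ⁅a, R b⁆) = ⁅R a, R b⁆ + α • ⁅a, b⁆ := by
    intro a b
    have h := hyb a b
    have : R (⁅R a, b⁆ + ⁅a, R b⁆) - (⁅R a, R b⁆ + α • ⁅a, b⁆) = 0 := by
      rw [← neg_eq_zero, ← h]; abel
    exact sub_eq_zero.mp this
  intro br
  constructor
  · intro a b
    simp only [br, ← lie_skew b (R a), ← lie_skew (R b) a]
    abel
  · intro a b c
    simp only [br, hR, lie_add, add_lie, lie_smul, smul_lie]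
    have h1 := lie_jacobi (R a) (R b) c
    have h2 := lie_jacobi a (R b) (R c)
    have h3 := lie_jacobi (R a) b (R c)
    have h4 := lie_jacobi a b c
    linear_combination (norm := module) h1 + h2 + h3 + α • h4
end

section
/- Let θ : C^∞(g*) differentials → vector fields be the map dH ↦ {R(dH), ·} associated with an R-matrix Lie bracket, and let C₁, C₂ be Casimir functions of the natural Lie–Poisson bracket on g*. Then C₁ and C₂ are in involution with respect to the R-deformed Lie–Poisson bracket: {C₁, C₂}₁(L) := ⟨L, [dC₂, dC₁]_R⟩ = 0 for all L ∈ g*. -/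
/-- Casimir functions of the natural Lie–Poisson bracket are in
involution with respect to the R-deformed Lie–Poisson bracket:
`{C₁,C₂}₁(L) = ⟨L, [dC₂, dC₁]_R⟩ = 0`. -/
theorem stmt15 {g : Type*} [LieRing g] [LieAlgebra ℝ g]
    (B : g →ₗ[ℝ] g →ₗ[ℝ] ℝ)
    (hsymm : ∀ a b : g, B a b = B b a)
    (hinv : ∀ a b c : g, B ⁅a, b⁆ c + B b ⁅a, c⁆ = 0)
    (hnd : ∀ a : g, (∀ b, B a b = 0) → a = 0)
    (R : g →ₗ[ℝ] g) (d1 d2 : g → g)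
    (hC1 : ∀ L x : g, B L ⁅d1 L, x⁆ = 0)
    (hC2 : ∀ L x : g, B L ⁅d2 L, x⁆ = 0) :
    ∀ L : g, B L (⁅R (d2 L), d1 L⁆ + ⁅d2 L, R (d1 L)⁆) = 0 := by
  intro L
  have h1 : B L ⁅R (d2 L), d1 L⁆ = 0 := by
    have := hC1 L (R (d2 L))
    rw [← lie_skew, map_neg] at this
    linarith
  simp [h1, hC2 L (R (d1 L))]
end
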